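/- Let r ≥ 2 and let T be a finite source-regular tree (every vertex a source or sink, every source of degree exactly r with all neighbors sinks). Let w : T₀ → ℕ_{≥1} be a weight function such that for each source a and each neighbor b of a, w(a) ≤ w(b). Let m = max{w(a) : a a source}. Then m + (r-1)·Σ_{a source} w(a) ≤ Σ_{b sink} w(b). -/

import Mathlib

/-- In a finite source-regular tree with positive integer
weights `w` that are nondecreasing from each source to its neighbours, with
`m` the maximal weight of a source,
`m + (r-1) * Σ_{sources} w ≤ Σ_{sinks} w`. -/
theorem stmt14 (r : ℕ) (hr : 2 ≤ r) (V : Type*) [Fintype V] [DecidableEq V]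
    (G : SimpleGraph V) [DecidableRel G.Adj] (hT : G.IsTree)
    (src : V → Bool)
    (hedge : ∀ u v, G.Adj u v → (src u = true ↔ src v = false))
    (hdeg : ∀ v, src v = true → G.degree v = r)
    (w : V → ℕ) (hw : ∀ v, 1 ≤ w v)
    (hmono : ∀ u v, G.Adj u v → src u = true → w u ≤ w v)
    (m : ℕ) (hm1 : ∀ v, src v = true → w v ≤ m)
    (hm2 : ∃ v, src v = true ∧ w v = m) :
    m + (r - 1) * (∑ v ∈ Finset.univ.filter fun v => src v = true, w v) ≤
      ∑ v ∈ Finset.univ.filter fun v => src v = false, w v := by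
  classical
  obtain ⟨a₀, ha₀s, ha₀w⟩ := hm2
  have hconn : G.Connected := hT.isConnected
  set d : V → ℕ := fun v => G.dist a₀ v with hd
  -- parity along walks
  have hparity : ∀ (u v : V) (p : G.Walk u v), (src v = src u) ↔ Even p.length := by
    intro u v p
    induction p with
    | nil => simp
    | @cons u x v h q ih =>
      have hne := hedge _ _ h
      rw [SimpleGraph.Walk.length_cons, Nat.even_add_one, ← ih]
      revert hne; cases hsu : src u <;> cases hsx : src x <;> cases hsv : src v <;> simp
  have hwalk : ∀ v : V, ∃ p : G.Walk a₀ v, p.length = d v := fun v =>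
    (hconn.preconnected a₀ v).exists_walk_length_eq_dist
  have hsrc_dist : ∀ v : V, src v = true ↔ Even (d v) := by
    intro v
    obtain ⟨p, hp⟩ := hwalk v
    rw [← hp, ← hparity a₀ v p, ha₀s]
  -- adjacent vertices differ in distance by exactly one
  have hstep : ∀ u v, G.Adj u v → d v = d u + 1 ∨ d u = d v + 1 := by
    intro u v h
    have h1 : G.dist u v = 1 := SimpleGraph.dist_eq_one_iff_adj.mpr h
    have h2 : G.dist v u = 1 := SimpleGraph.dist_eq_one_iff_adj.mpr h.symm
    have t1 : d v ≤ d u + 1 := by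
      have ht := hconn.dist_triangle (u := a₀) (v := u) (w := v)
      show G.dist a₀ v ≤ G.dist a₀ u + 1
      omega
    have t2 : d u ≤ d v + 1 := by
      have ht := hconn.dist_triangle (u := a₀) (v := v) (w := u)
      show G.dist a₀ u ≤ G.dist a₀ v + 1
      omega
    have hne : d u ≠ d v := by
      intro heq
      have hsu := hsrc_dist u
      have hsv := hsrc_dist v
      have hne' := hedge _ _ h
      rw [heq] at hsu
      revert hsu hsv hne'
      cases src u <;> cases src v <;> simp <;> tauto
    omega
  -- uniqueness of the parent
  have huniq : ∀ v u u', G.Adj v u → G.Adj v u' → d u + 1 = d v → d u' + 1 = d v →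
      u = u' := by
    intro v u u' h h' hu hu'
    have build : ∀ x, G.Adj v x → d x + 1 = d v →
        ∃ p : G.Walk a₀ v, p.IsPath ∧ ∃ (q : G.Walk a₀ x) (hq : G.Adj x v), p = q.concat hq := by
      intro x hx hxd
      obtain ⟨q, hq⟩ := hwalk x
      have hqpath : q.IsPath := q.isPath_of_length_eq_dist hq
      have hvq : v ∉ q.support := by
        intro hv
        have h1 : G.dist a₀ v ≤ (q.takeUntil v hv).length := SimpleGraph.dist_le _
        have h2 : (q.takeUntil v hv).length ≤ q.length :=
          SimpleGraph.Walk.length_takeUntil_le q hv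
        have h3 : d v ≤ q.length := le_trans h1 h2
        omega
      refine ⟨q.concat hx.symm, ?_, q, hx.symm, rfl⟩
      rw [SimpleGraph.Walk.isPath_def, SimpleGraph.Walk.support_concat,
        List.nodup_append]
      exact ⟨hqpath.support_nodup, List.nodup_singleton v,
        by intro a ha b hb hab; simp only [List.mem_singleton] at hb; subst hb; subst hab; exact hvq ha⟩
    obtain ⟨p1, hp1, q1, hq1a, hq1⟩ := build u h hu
    obtain ⟨p2, hp2, q2, hq2a, hq2⟩ := build u' h' hu'
    have : (⟨p1, hp1⟩ : G.Path a₀ v) = ⟨p2, hp2⟩ :=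
      SimpleGraph.isAcyclic_iff_path_unique.mp hT.IsAcyclic _ _
    have hpe : p1 = p2 := congrArg Subtype.val this
    rw [hq1, hq2] at hpe
    exact (SimpleGraph.Walk.concat_inj hpe).1
  -- every vertex other than the root has a parent
  have hparent : ∀ v : V, v ≠ a₀ → ∃ u, G.Adj v u ∧ d u + 1 = d v := by
    intro v hv
    have hdv : d v ≠ 0 := by
      simp only [hd]
      rw [SimpleGraph.dist_ne_zero_iff_ne_and_reachable]
      exact ⟨fun h => hv h.symm, hconn.preconnected a₀ v⟩
    obtain ⟨p, hp⟩ := hwalk v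
    obtain ⟨x, hx, q, hq⟩ := SimpleGraph.Walk.exists_eq_cons_of_ne hv p.reverse
    refine ⟨x, hx, ?_⟩
    have hlen : p.length = q.length + 1 := by
      have := congrArg SimpleGraph.Walk.length hq
      simpa using this
    have hdx : d x ≤ q.length := by
      have h1 : G.dist a₀ x ≤ q.reverse.length := SimpleGraph.dist_le _
      simpa using h1
    have := hstep x v hx.symm
    omega
  -- the parent function
  let f : V → V := fun v => if h : v = a₀ then a₀ else Classical.choose (hparent v h)
  have hf : ∀ v, v ≠ a₀ → G.Adj v (f v) ∧ d (f v) + 1 = d v := by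
    intro v h
    simp only [f, dif_neg h]
    exact Classical.choose_spec (hparent v h)
  set A := Finset.univ.filter fun v => src v = true with hA
  set B := Finset.univ.filter fun v => src v = false with hB
  have ha₀A : a₀ ∈ A := by simp [hA, ha₀s]
  have hBne : ∀ b ∈ B, b ≠ a₀ := by
    intro b hb hba
    simp only [hB, Finset.mem_filter] at hb
    rw [hba, ha₀s] at hb
    simp at hb
  have hfsrc : ∀ b ∈ B, src (f b) = true := by
    intro b hb
    have hadj := (hf b (hBne b hb)).1
    have := hedge b (f b) hadj
    simp only [hB, Finset.mem_filter] at hb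
    cases hsf : src (f b)
    · rw [hb.2, hsf] at this; simp at this
    · rfl
  have hmaps : ∀ b ∈ B, f b ∈ A := by
    intro b hb
    simp [hA, hfsrc b hb]
  have hwf : ∀ b ∈ B, w (f b) ≤ w b := by
    intro b hb
    exact hmono (f b) b ((hf b (hBne b hb)).1).symm (hfsrc b hb)
  -- fiber cardinalities
  have hfiber : ∀ a ∈ A, (G.neighborFinset a).filter (fun b => d b = d a + 1)
      ⊆ B.filter (fun b => f b = a) := by
    intro a ha b hb
    simp only [Finset.mem_filter, SimpleGraph.mem_neighborFinset] at hb
    obtain ⟨hadj, hdb⟩ := hb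
    simp only [hA, Finset.mem_filter] at ha
    have hsb : src b = false := (hedge a b hadj).mp ha.2
    have hbB : b ∈ B := by simp [hB, hsb]
    have hbne : b ≠ a₀ := hBne b hbB
    have hfb := hf b hbne
    have : f b = a := huniq b (f b) a hfb.1 hadj.symm hfb.2 (by omega)
    simp [Finset.mem_filter, hbB, this]
  have hcard : ∀ a ∈ A, r - 1 ≤ ((G.neighborFinset a).filter
      (fun b => d b = d a + 1)).card := by
    intro a ha
    simp only [hA, Finset.mem_filter] at ha
    have hdegr : (G.neighborFinset a).card = r := by
      rw [SimpleGraph.card_neighborFinset_eq_degree]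
      exact hdeg a ha.2
    have hsplit := Finset.card_filter_add_card_filter_not
      (s := G.neighborFinset a) (p := fun b => d b = d a + 1)
    have hone : ((G.neighborFinset a).filter (fun b => ¬ d b = d a + 1)).card ≤ 1 := by
      rw [Finset.card_le_one]
      intro b hb b' hb'
      simp only [Finset.mem_filter, SimpleGraph.mem_neighborFinset] at hb hb'
      have h1 : d b + 1 = d a := by
        have := hstep a b hb.1
        omega
      have h2 : d b' + 1 = d a := by
        have := hstep a b' hb'.1
        omega
      exact huniq a b b' hb.1 hb'.1 h1 h2
    omega
  have hcard0 : r ≤ ((G.neighborFinset a₀).filter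
      (fun b => d b = d a₀ + 1)).card := by
    have hda₀ : d a₀ = 0 := by simp [hd]
    have hdegr : (G.neighborFinset a₀).card = r := by
      rw [SimpleGraph.card_neighborFinset_eq_degree]
      exact hdeg a₀ ha₀s
    have : (G.neighborFinset a₀).filter (fun b => d b = d a₀ + 1)
        = G.neighborFinset a₀ := by
      apply Finset.filter_true_of_mem
      intro b hb
      rw [SimpleGraph.mem_neighborFinset] at hb
      have := hstep a₀ b hb
      omega
    rw [this, hdegr]
  -- assemble
  have key : ∑ a ∈ A, ((r - 1) * w a + if a = a₀ then w a else 0)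
      ≤ ∑ b ∈ B, w b := by
    calc ∑ a ∈ A, ((r - 1) * w a + if a = a₀ then w a else 0)
        ≤ ∑ a ∈ A, (B.filter (fun b => f b = a)).card * w a := by
          apply Finset.sum_le_sum
          intro a ha
          have hc1 : r - 1 ≤ (B.filter (fun b => f b = a)).card :=
            le_trans (hcard a ha) (Finset.card_le_card (hfiber a ha))
          by_cases hae : a = a₀
          · subst hae
            have hc2 : r ≤ (B.filter (fun b => f b = a)).card :=
              le_trans hcard0 (Finset.card_le_card (hfiber a ha))
            simp only [if_pos rfl]
            calc (r - 1) * w a + w a = ((r - 1) + 1) * w a := by ring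
              _ = r * w a := by congr 1; omega
              _ ≤ _ := Nat.mul_le_mul_right _ hc2
          · simp only [if_neg hae, add_zero]
            exact Nat.mul_le_mul_right _ hc1
      _ = ∑ a ∈ A, ∑ b ∈ B.filter (fun b => f b = a), w (f b) := by
          apply Finset.sum_congr rfl
          intro a _
          have hcongr : ∀ b ∈ B.filter (fun b => f b = a), w (f b) = w a := by
            intro b hb
            rw [(Finset.mem_filter.mp hb).2]
          rw [Finset.sum_congr rfl hcongr, Finset.sum_const, smul_eq_mul]
      _ = ∑ b ∈ B, w (f b) := Finset.sum_fiberwise_of_maps_to hmaps _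
      _ ≤ ∑ b ∈ B, w b := Finset.sum_le_sum hwf
  have hsplit : ∑ a ∈ A, ((r - 1) * w a + if a = a₀ then w a else 0)
      = (r - 1) * (∑ a ∈ A, w a) + m := by
    rw [Finset.sum_add_distrib, ← Finset.mul_sum, Finset.sum_ite_eq' A a₀ w,
      if_pos ha₀A, ha₀w]
  rw [hsplit] at key
  omega
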